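/- Let n > 1 and let S be a semigroup satisfying x*y ∈ {y*x, (x*y)^n} for all x, y. If a, b ∈ S satisfy a = u*v and b = v*u with a ≠ b (u, v ∈ S¹), then a^n = a and b^n = b. -/

import Mathlib

theorem pconj_pow_eq {S : Type*} [Semigroup S] (n : ℕ) (hn : 1 < n)
    (hS : ∀ x y : S, x * y = y * x ∨ ((x * y : S) : WithOne S) = ((x * y : S) : WithOne S) ^ n)
    (a b : S) (u v : WithOne S)
    (ha : (a : WithOne S) = u * v) (hb : (b : WithOne S) = v * u) (hab : a ≠ b) :
    (a : WithOne S) ^ n = (a : WithOne S) ∧ (b : WithOne S) ^ n = (b : WithOne S) := by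
  induction u using WithOne.recOneCoe with
  | one =>
    rw [one_mul] at ha
    rw [mul_one] at hb
    exact absurd (WithOne.coe_inj.mp (ha.trans hb.symm)) hab
  | coe x =>
    induction v using WithOne.recOneCoe with
    | one =>
      rw [mul_one] at ha
      rw [one_mul] at hb
      exact absurd (WithOne.coe_inj.mp (ha.trans hb.symm)) hab
    | coe y =>
      rw [← WithOne.coe_mul] at ha hb
      have ha' : a = x * y := WithOne.coe_inj.mp ha
      have hb' : b = y * x := WithOne.coe_inj.mp hb
      constructor
      · rcases hS x y with h | h
        · exact absurd (ha'.trans (h.trans hb'.symm)) hab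
        · rw [ha, ← h]
      · rcases hS y x with h | h
        · exact absurd (hb'.trans (h.trans ha'.symm)) hab.symm
        · rw [hb, ← h]
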